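/- arXiv:0902.1155 — 2 statements merged into one kernel-verified Lean document; each statement's English description precedes it below -/
import Mathlib

section
/- Let K be any finite field and x, y ∈ K with 1 + x² + y² = 0. Then the 3×3 matrices H₁₁ = [[1,x,y],[x,x²,xy],[y,xy,y²]], H₁₂ = [[1,0,0],[x,0,0],[y,0,0]], H₂₁ = [[1,x,y],[0,0,0],[0,0,0]], H₂₂ = [[1,0,0],[0,0,0],[0,0,0]], together with the identity and zero matrices, form a set closed under multiplication and transpose satisfying Hᵢⱼ·Hₖₗ = Hᵢₗ if (j,k) ≠ (1,1), Hᵢ₁·H₁ₗ = 0, and Hᵢⱼᵀ = Hⱼᵢ. -/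
open Matrix

/-- The four `3 × 3` matrices `Hᵢⱼ` built from elements `x, y` with
`1 + x² + y² = 0`. -/
def Hmat3 {K : Type*} [Field K] (x y : K) :
    Fin 2 → Fin 2 → Matrix (Fin 3) (Fin 3) K :=
  fun i j =>
    if i = 0 then
      (if j = 0 then !![1, x, y; x, x ^ 2, x * y; y, x * y, y ^ 2]
       else !![1, 0, 0; x, 0, 0; y, 0, 0])
    else
      (if j = 0 then !![1, x, y; 0, 0, 0; 0, 0, 0]
       else !![1, 0, 0; 0, 0, 0; 0, 0, 0])

section Aux
variable {K : Type*} [Field K] (x y : K)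

lemma Hmat3_mul (i j k l : Fin 2) (h : (j, k) ≠ ((0 : Fin 2), (0 : Fin 2))) :
    Hmat3 x y i j * Hmat3 x y k l = Hmat3 x y i l := by
  ext a b
  fin_cases i <;> fin_cases j <;> fin_cases k <;> fin_cases l <;>
    simp_all [Hmat3] <;>
    fin_cases a <;> fin_cases b <;>
      simp [Matrix.mul_apply, Fin.sum_univ_three, Matrix.vecHead, Matrix.vecTail] <;> ring

lemma Hmat3_zero (hxy : 1 + x ^ 2 + y ^ 2 = 0) (i l : Fin 2) :
    Hmat3 x y i 0 * Hmat3 x y 0 l = 0 := by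
  ext a b
  fin_cases i <;> fin_cases l <;> simp [Hmat3] <;>
    fin_cases a <;> fin_cases b <;>
      simp [Matrix.mul_apply, Fin.sum_univ_three, Matrix.vecHead, Matrix.vecTail] <;>
      first
        | linear_combination hxy
        | linear_combination x * hxy
        | linear_combination y * hxy
        | linear_combination x ^ 2 * hxy
        | linear_combination y ^ 2 * hxy
        | linear_combination x * y * hxy
        | ring

lemma Hmat3_transpose (i j : Fin 2) : (Hmat3 x y i j)ᵀ = Hmat3 x y j i := by
  ext a b
  fin_cases i <;> fin_cases j <;> simp [Hmat3] <;>
    fin_cases a <;> fin_cases b <;>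
      simp [Matrix.transpose_apply, Matrix.vecHead, Matrix.vecTail]

end Aux

/-- For a finite field `K` and `x, y ∈ K` with `1 + x² + y² = 0`, the matrices
`Hᵢⱼ` together with the identity and zero matrices form a set closed under
multiplication and transpose, with the stated multiplication and transposition
rules. -/
theorem twisted_A_in_M3 {K : Type*} [Field K] [Fintype K]
    (x y : K) (hxy : 1 + x ^ 2 + y ^ 2 = 0) :
    (∀ X Y : Matrix (Fin 3) (Fin 3) K,
        ((∃ i j, X = Hmat3 x y i j) ∨ X = 1 ∨ X = 0) →
        ((∃ i j, Y = Hmat3 x y i j) ∨ Y = 1 ∨ Y = 0) →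
        (((∃ i j, X * Y = Hmat3 x y i j) ∨ X * Y = 1 ∨ X * Y = 0) ∧
          ((∃ i j, Xᵀ = Hmat3 x y i j) ∨ Xᵀ = 1 ∨ Xᵀ = 0))) ∧
    (∀ i j k l : Fin 2, (j, k) ≠ (0, 0) →
        Hmat3 x y i j * Hmat3 x y k l = Hmat3 x y i l) ∧
    (∀ i l : Fin 2, Hmat3 x y i 0 * Hmat3 x y 0 l = 0) ∧
    (∀ i j : Fin 2, (Hmat3 x y i j)ᵀ = Hmat3 x y j i) := by
  refine ⟨?_, fun i j k l h => Hmat3_mul x y i j k l h,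
    fun i l => Hmat3_zero x y hxy i l, fun i j => Hmat3_transpose x y i j⟩
  rintro X Y hX hY
  constructor
  · rcases hX with ⟨i, j, rfl⟩ | rfl | rfl
    · rcases hY with ⟨k, l, rfl⟩ | rfl | rfl
      · by_cases h : (j, k) = ((0 : Fin 2), (0 : Fin 2))
        · rw [Prod.mk.injEq] at h
          rcases h with ⟨rfl, rfl⟩
          exact Or.inr (Or.inr (Hmat3_zero x y hxy i l))
        · exact Or.inl ⟨i, l, Hmat3_mul x y i j k l h⟩
      · exact Or.inl ⟨i, j, by rw [mul_one]⟩
      · exact Or.inr (Or.inr (by rw [mul_zero]))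
    · rw [one_mul]; exact hY
    · exact Or.inr (Or.inr (by rw [zero_mul]))
  · rcases hX with ⟨i, j, rfl⟩ | rfl | rfl
    · exact Or.inl ⟨j, i, Hmat3_transpose x y i j⟩
    · exact Or.inr (Or.inl Matrix.transpose_one)
    · exact Or.inr (Or.inr Matrix.transpose_zero)
end

section
/- Let K be a finite field with |K| ≡ 3 (mod 4) and let d be the exponent of GL₂(K). Then every 2×2 matrix A over K satisfies A·(AᵀA)^d = A. -/
open Matrix

private lemma aniso {K : Type*} [Field K] [Fintype K]
    (hcard : Fintype.card K % 4 = 3) {x y : K} (h : x ^ 2 + y ^ 2 = 0) :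
    x = 0 ∧ y = 0 := by
  classical
  have hns : ¬ IsSquare (-1 : K) := by
    rw [FiniteField.isSquare_neg_one_iff]
    simpa using hcard
  by_cases hy : y = 0
  · subst hy
    refine ⟨?_, rfl⟩
    exact pow_eq_zero_iff (n := 2) (by norm_num) |>.mp (by linear_combination h)
  · exfalso
    apply hns
    refine ⟨x / y, ?_⟩
    field_simp
    linear_combination -h

/-- Let `K` be a finite field with `|K| ≡ 3 (mod 4)` and let `d` be the exponent
of `GL₂(K)`. Then every `2 × 2` matrix `A` over `K` satisfies `A (Aᵀ A)^d = A`. -/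
theorem matrix_transpose_power_identity {K : Type*} [Field K] [Fintype K]
    (hcard : Fintype.card K % 4 = 3)
    (A : Matrix (Fin 2) (Fin 2) K) :
    A * (Aᵀ * A) ^ Monoid.exponent (Matrix.GeneralLinearGroup (Fin 2) K) = A := by
  classical
  set d := Monoid.exponent (Matrix.GeneralLinearGroup (Fin 2) K) with hd
  set B := Aᵀ * A with hB
  have hd0 : d ≠ 0 := Monoid.exponent_ne_zero_of_finite
  by_cases hdet : IsUnit A.det
  · -- invertible case
    have hBdet : IsUnit B.det := by
      rw [hB, Matrix.det_mul, Matrix.det_transpose]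
      exact hdet.mul hdet
    have hBu : IsUnit B := (Matrix.isUnit_iff_isUnit_det B).mpr hBdet
    obtain ⟨u, hu⟩ := hBu
    have : B ^ d = 1 := by
      rw [← hu, ← Units.val_pow_eq_pow_val, Monoid.pow_exponent_eq_one u, Units.val_one]
    rw [this, mul_one]
  · -- singular case
    have h0 : A.det = 0 := by
      by_contra h
      exact hdet (Ne.isUnit h)
    have hdet2 : A 0 0 * A 1 1 - A 0 1 * A 1 0 = 0 := by
      have h1 := h0
      rw [Matrix.det_fin_two] at h1
      linear_combination h1
    set a := A 0 0 with ha
    set b := A 0 1 with hb2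
    set c := A 1 0 with hc
    set e := A 1 1 with he
    set t := a ^ 2 + b ^ 2 + c ^ 2 + e ^ 2 with ht
    by_cases htz : t = 0
    · -- then A = 0
      have h1 : (a ^ 2 + c ^ 2) * (a ^ 2 + b ^ 2) = 0 := by
        linear_combination a ^ 2 * htz + (-(b * c) - a * e) * hdet2
      have h2 : (b ^ 2 + e ^ 2) * (a ^ 2 + b ^ 2) = 0 := by
        linear_combination b ^ 2 * htz + (a * e + b * c) * hdet2
      have h3 : (a ^ 2 + c ^ 2) * (c ^ 2 + e ^ 2) = 0 := by
        linear_combination c ^ 2 * htz + (a * e + b * c) * hdet2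
      have h4 : (b ^ 2 + e ^ 2) * (c ^ 2 + e ^ 2) = 0 := by
        linear_combination e ^ 2 * htz + (-(b * c) - a * e) * hdet2
      have hA0 : A = 0 := by
        have za : a = 0 := by
          rcases mul_eq_zero.mp h1 with h | h
          · exact (aniso hcard h).1
          · exact (aniso hcard h).1
        have zb : b = 0 := by
          rcases mul_eq_zero.mp h2 with h | h
          · exact (aniso hcard h).1
          · exact (aniso hcard h).2
        have zc : c = 0 := by
          rcases mul_eq_zero.mp h3 with h | h
          · exact (aniso hcard h).2
          · exact (aniso hcard h).1
        have ze : e = 0 := by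
          rcases mul_eq_zero.mp h4 with h | h
          · exact (aniso hcard h).2
          · exact (aniso hcard h).2
        ext i j
        fin_cases i <;> fin_cases j <;> simpa [ha, hb2, hc, he] using (by assumption : _)
      rw [hA0, zero_mul]
    · -- rank one case: A * B = t • A
      have hAB : A * B = t • A := by
        ext i j
        fin_cases i <;> fin_cases j <;>
          simp [hB, Matrix.mul_apply, Fin.sum_univ_two, Matrix.transpose_apply,
            Matrix.smul_apply, smul_eq_mul]
        · linear_combination -e * hdet2
        · linear_combination c * hdet2
        · linear_combination b * hdet2
        · linear_combination -a * hdet2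
      have key : ∀ n : ℕ, A * B ^ (n + 1) = t ^ (n + 1) • A := by
        intro n
        induction n with
        | zero => simpa using hAB
        | succ n ih =>
            calc A * B ^ (n + 2) = (A * B ^ (n + 1)) * B := by
                  rw [mul_assoc, pow_succ]
              _ = (t ^ (n + 1) • A) * B := by rw [ih]
              _ = t ^ (n + 1) • (A * B) := by rw [Matrix.smul_mul]
              _ = t ^ (n + 2) • A := by rw [hAB, smul_smul, ← pow_succ]
      -- t ^ d = 1
      have htd : t ^ d = 1 := by
        have htu : IsUnit (t • (1 : Matrix (Fin 2) (Fin 2) K)).det := by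
          rw [Matrix.det_smul, Matrix.det_one]
          simp only [mul_one, Fintype.card_fin]
          exact (isUnit_iff_ne_zero.mpr htz).pow 2
        obtain ⟨u, hu⟩ := (Matrix.isUnit_iff_isUnit_det _).mpr htu
        have hpow : (t • (1 : Matrix (Fin 2) (Fin 2) K)) ^ d = 1 := by
          rw [← hu, ← Units.val_pow_eq_pow_val, Monoid.pow_exponent_eq_one u, Units.val_one]
        have := congrFun (congrFun hpow 0) 0
        simpa [smul_pow, Matrix.smul_apply, Matrix.one_apply] using this
      obtain ⟨m, hm⟩ := Nat.exists_eq_succ_of_ne_zero hd0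
      have h1 : t ^ (m + 1) = 1 := by rw [← Nat.succ_eq_add_one, ← hm, htd]
      rw [hm, key m, h1, one_smul]
end
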